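/- Let λ ∈ ℂ with λ ∉ {0, −1/2, −1, −3/2, …}. Then for each fixed x ∈ ℂ there is ε > 0 such that for all complex t with |t| < ε: Σ_{n=0}^∞ [(λ−1/2)_n/(2λ)_n]·C_n^λ(x)·t^n = ((1+R−xt)/2)^{1/2−λ}. -/

import Mathlib

open scoped BigOperators

noncomputable def poch (a : ℂ) (n : ℕ) : ℂ := (ascPochhammer ℂ n).eval a

noncomputable def geg (l : ℂ) (n : ℕ) (x : ℂ) : ℂ :=
  ∑ k ∈ Finset.range (n / 2 + 1),
    (-1 : ℂ) ^ k * poch l (n - k) * (2 * x) ^ (n - 2 * k) /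
      ((Nat.factorial k : ℂ) * (Nat.factorial (n - 2 * k) : ℂ))

noncomputable def hyp2F1 (a b c z : ℂ) : ℂ :=
  ∑' k : ℕ, poch a k * poch b k / (poch c k * (Nat.factorial k : ℂ)) * z ^ k

noncomputable def Rc (x t : ℂ) : ℂ := (1 - 2 * x * t + t ^ 2) ^ ((1 : ℂ) / 2)

noncomputable def Uc (u x t : ℂ) : ℂ :=
  (1 - 2 * (1 - u) * x * t + (1 - u) ^ 2 * t ^ 2) ^ ((1 : ℂ) / 2)

noncomputable def legP (ν μ z : ℂ) : ℂ :=
  2 ^ μ / Complex.Gamma (1 - μ) * (z ^ 2 - 1) ^ (-μ / 2) *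
    hyp2F1 (-ν - μ) (1 + ν - μ) (1 - μ) ((1 - z) / 2)

noncomputable def hypT2F1 (n : ℕ) (b c u : ℂ) : ℂ :=
  ∑ k ∈ Finset.range (n + 1),
    poch (-(n : ℂ)) k * poch b k * u ^ k / (poch c k * (Nat.factorial k : ℂ))

noncomputable def hypT3F2 (n : ℕ) (a b c d u : ℂ) : ℂ :=
  ∑ k ∈ Finset.range (n + 1),
    poch (-(n : ℂ)) k * poch a k * poch b k * u ^ k /
      (poch c k * poch d k * (Nat.factorial k : ℂ))

noncomputable def pochR (a : ℝ) (n : ℕ) : ℝ := (ascPochhammer ℝ n).eval a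

noncomputable def gegR (l : ℝ) (n : ℕ) (x : ℝ) : ℝ :=
  ∑ k ∈ Finset.range (n / 2 + 1),
    (-1 : ℝ) ^ k * pochR l (n - k) * (2 * x) ^ (n - 2 * k) /
      ((Nat.factorial k : ℝ) * (Nat.factorial (n - 2 * k) : ℝ))

noncomputable def gegPoly (l : ℂ) (n : ℕ) : Polynomial ℂ :=
  ∑ k ∈ Finset.range (n / 2 + 1),
    Polynomial.C ((-1 : ℂ) ^ k * poch l (n - k) * 2 ^ (n - 2 * k) /
      ((Nat.factorial k : ℂ) * (Nat.factorial (n - 2 * k) : ℂ))) *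
      Polynomial.X ^ (n - 2 * k)

open Complex Filter Topology

namespace GegAux


lemma analyticAt_deriv {f : ℂ → ℂ} (hf : AnalyticAt ℂ f 0) : AnalyticAt ℂ (deriv f) 0 := by
  have h : AnalyticOnNhd ℂ f {y | AnalyticAt ℂ f y} := fun y hy => hy
  exact h.deriv 0 hf

lemma itd_add {f g : ℂ → ℂ} (hf : AnalyticAt ℂ f 0) (hg : AnalyticAt ℂ g 0) (n : ℕ) :
    iteratedDeriv n (fun z => f z + g z) 0 = iteratedDeriv n f 0 + iteratedDeriv n g 0 := by
  induction n generalizing f g with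
  | zero => simp
  | succ n ih =>
    rw [iteratedDeriv_succ', iteratedDeriv_succ', iteratedDeriv_succ']
    have h1 : deriv (fun z => f z + g z) =ᶠ[𝓝 (0:ℂ)] fun z => deriv f z + deriv g z := by
      filter_upwards [hf.eventually_analyticAt, hg.eventually_analyticAt] with z hfz hgz
      exact deriv_add hfz.differentiableAt hgz.differentiableAt
    rw [Filter.EventuallyEq.iteratedDeriv_eq n h1]
    exact ih (analyticAt_deriv hf) (analyticAt_deriv hg)

lemma itd_cmul {f : ℂ → ℂ} (hf : AnalyticAt ℂ f 0) (c : ℂ) (n : ℕ) :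
    iteratedDeriv n (fun z => c * f z) 0 = c * iteratedDeriv n f 0 := by
  induction n generalizing f with
  | zero => simp
  | succ n ih =>
    rw [iteratedDeriv_succ', iteratedDeriv_succ']
    have h1 : deriv (fun z => c * f z) =ᶠ[𝓝 (0:ℂ)] fun z => c * deriv f z := by
      filter_upwards [hf.eventually_analyticAt] with z hfz
      exact deriv_const_mul c hfz.differentiableAt
    rw [Filter.EventuallyEq.iteratedDeriv_eq n h1]
    exact ih (analyticAt_deriv hf)

lemma itd_zmul {f : ℂ → ℂ} (hf : AnalyticAt ℂ f 0) (n : ℕ) :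
    iteratedDeriv n (fun z => z * f z) 0 = (n : ℂ) * iteratedDeriv (n - 1) f 0 := by
  induction n generalizing f with
  | zero => simp
  | succ n ih =>
    rw [iteratedDeriv_succ']
    have h1 : deriv (fun z => z * f z) =ᶠ[𝓝 (0:ℂ)] fun z => f z + z * deriv f z := by
      filter_upwards [hf.eventually_analyticAt] with z hfz
      have h2 : HasDerivAt (fun y => y * f y) (1 * f z + z * deriv f z) z :=
        (hasDerivAt_id' z).mul hfz.differentiableAt.hasDerivAt
      simpa [add_comm] using h2.deriv
    have hg' : AnalyticAt ℂ (fun z => z * deriv f z) 0 := analyticAt_id.mul (analyticAt_deriv hf)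
    rw [Filter.EventuallyEq.iteratedDeriv_eq n h1, itd_add hf hg' n, ih (analyticAt_deriv hf)]
    cases n with
    | zero => simp
    | succ m =>
      rw [show m + 1 - 1 = m from rfl, ← iteratedDeriv_succ']
      push_cast
      ring

lemma itd_z2mul {f : ℂ → ℂ} (hf : AnalyticAt ℂ f 0) (n : ℕ) :
    iteratedDeriv n (fun z => z ^ 2 * f z) 0
      = (n : ℂ) * ((n : ℂ) - 1) * iteratedDeriv (n - 2) f 0 := by
  have h0 : (fun z : ℂ => z ^ 2 * f z) = fun z => z * (z * f z) := by funext z; ring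
  have hg' : AnalyticAt ℂ (fun z => z * f z) 0 := analyticAt_id.mul hf
  rw [h0, itd_zmul hg']
  cases n with
  | zero => simp
  | succ m =>
    rw [show m + 1 - 1 = m from rfl, itd_zmul hf]
    cases m with
    | zero => simp
    | succ k =>
      rw [show k + 1 + 1 - 2 = k + 1 - 1 from rfl]
      push_cast
      ring

lemma itd_z3mul {f : ℂ → ℂ} (hf : AnalyticAt ℂ f 0) (n : ℕ) :
    iteratedDeriv n (fun z => z ^ 3 * f z) 0
      = (n : ℂ) * ((n : ℂ) - 1) * ((n : ℂ) - 2) * iteratedDeriv (n - 3) f 0 := by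
  have h0 : (fun z : ℂ => z ^ 3 * f z) = fun z => z * (z ^ 2 * f z) := by funext z; ring
  have hg' : AnalyticAt ℂ (fun z => z ^ 2 * f z) 0 := (analyticAt_id.pow 2).mul hf
  rw [h0, itd_zmul hg']
  cases n with
  | zero => simp
  | succ m =>
    rw [show m + 1 - 1 = m from rfl, itd_z2mul hf]
    rcases m with _ | _ | k
    · simp
    · simp
    · rw [show k + 2 - 2 = k from rfl, show k + 2 + 1 - 3 = k from rfl]
      push_cast
      ring

lemma itd_zero_fun (n : ℕ) : iteratedDeriv n (fun _ : ℂ => (0:ℂ)) 0 = 0 := by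
  induction n with
  | zero => simp
  | succ m ih =>
    rw [iteratedDeriv_succ']
    simpa [deriv_const'] using ih

lemma poch_zero (a : ℂ) : poch a 0 = 1 := by simp [poch]

lemma poch_one (a : ℂ) : poch a 1 = a := by simp [poch]

lemma poch_succ (a : ℂ) (n : ℕ) : poch a (n + 1) = poch a n * (a + n) :=
  ascPochhammer_succ_eval n a



noncomputable def Pf (x t : ℂ) : ℂ := 1 - 2 * x * t + t ^ 2
noncomputable def uf (x t : ℂ) : ℂ := (1 + Rc x t - x * t) / 2
noncomputable def gf (lam x : ℂ) : ℂ → ℂ := fun t => ((1 + Rc x t - x * t) / 2) ^ (1 / 2 - lam)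
noncomputable def Gf (lam x : ℂ) : ℂ → ℂ := fun t =>
  (1 / 2 - lam) * (gf lam x t / uf x t) * (((t - x) / Rc x t - x) / 2)

variable {lam x t : ℂ}

lemma Rc_eq (x t : ℂ) : Rc x t = Pf x t ^ ((1 : ℂ)/2) := rfl

lemma Rc_sq (hP : Pf x t ∈ slitPlane) : Rc x t * Rc x t = Pf x t := by
  have hPne : Pf x t ≠ 0 := slitPlane_ne_zero hP
  rw [Rc_eq, ← cpow_add _ _ hPne]
  norm_num

lemma Rc_ne (hP : Pf x t ∈ slitPlane) : Rc x t ≠ 0 := by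
  rw [Rc_eq]
  simp [cpow_eq_zero_iff, slitPlane_ne_zero hP]

lemma hasDerivAt_Pf (x t : ℂ) : HasDerivAt (Pf x) (2 * t - 2 * x) t := by
  have h : HasDerivAt (fun s : ℂ => 1 - 2 * x * s + s ^ 2)
      ((0 - 2 * x * 1) + (2 : ℕ) * t ^ (2 - 1)) t :=
    ((hasDerivAt_const t (1 : ℂ)).sub ((hasDerivAt_id t).const_mul (2 * x))).add (hasDerivAt_pow 2 t)
  have h2 : ((0 - 2 * x * 1) + ((2 : ℕ) : ℂ) * t ^ (2 - 1)) = 2 * t - 2 * x := by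
    push_cast; ring
  rw [h2] at h
  exact h

lemma hasDerivAt_Rc (hP : Pf x t ∈ slitPlane) :
    HasDerivAt (Rc x) ((t - x) / Rc x t) t := by
  have hPne : Pf x t ≠ 0 := slitPlane_ne_zero hP
  have hRne : Rc x t ≠ 0 := Rc_ne hP
  have hsq := Rc_sq hP
  have h1 : HasDerivAt (fun s => Pf x s ^ ((1:ℂ)/2))
      (((1:ℂ)/2) * Pf x t ^ ((1:ℂ)/2 - 1) * (2 * t - 2 * x)) t :=
    (hasDerivAt_Pf x t).cpow_const hP
  have h2 : ((1:ℂ)/2) * Pf x t ^ ((1:ℂ)/2 - 1) * (2 * t - 2 * x) = (t - x) / Rc x t := by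
    rw [cpow_sub _ _ hPne, cpow_one, ← Rc_eq, ← hsq]
    field_simp
  rw [← h2]
  exact h1

lemma hasDerivAt_uf (hP : Pf x t ∈ slitPlane) :
    HasDerivAt (uf x) (((t - x) / Rc x t - x) / 2) t := by
  have h1 : HasDerivAt (fun s : ℂ => (1 + Rc x s - x * s) / 2)
      ((0 + (t - x) / Rc x t - x * 1) / 2) t :=
    (((hasDerivAt_const t (1 : ℂ)).add (hasDerivAt_Rc hP)).sub
      ((hasDerivAt_id t).const_mul x)).div_const 2
  have h2 : ((0 + (t - x) / Rc x t - x * 1) / 2) = ((t - x) / Rc x t - x) / 2 := by ring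
  rw [h2] at h1
  exact h1

lemma uf_ne (hu : uf x t ∈ slitPlane) : uf x t ≠ 0 := slitPlane_ne_zero hu

lemma hasDerivAt_gf (hP : Pf x t ∈ slitPlane) (hu : uf x t ∈ slitPlane) :
    HasDerivAt (gf lam x) (Gf lam x t) t := by
  have hune : uf x t ≠ 0 := slitPlane_ne_zero hu
  have h1 : HasDerivAt (fun s => uf x s ^ (1/2 - lam))
      ((1/2 - lam) * uf x t ^ ((1/2 - lam) - 1) * (((t - x) / Rc x t - x) / 2)) t :=
    (hasDerivAt_uf hP).cpow_const hu
  have h2 : (1/2 - lam) * uf x t ^ ((1/2 - lam) - 1) * (((t - x) / Rc x t - x) / 2)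
      = Gf lam x t := by
    rw [cpow_sub _ _ hune, cpow_one]
    rfl
  rw [← h2]
  exact h1

lemma first_order (hP : Pf x t ∈ slitPlane) (hu : uf x t ∈ slitPlane) :
    t * Rc x t * Gf lam x t = (1/2 - lam) * (Rc x t - 1) * gf lam x t := by
  have hune : uf x t ≠ 0 := slitPlane_ne_zero hu
  have hRne : Rc x t ≠ 0 := Rc_ne hP
  have hsq := Rc_sq hP
  have hueq : uf x t = (1 + Rc x t - x * t) / 2 := rfl
  have hPeq : Pf x t = 1 - 2 * x * t + t ^ 2 := rfl
  rw [hPeq] at hsq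
  have hune' : (1 + Rc x t - x * t) ≠ 0 := by
    intro h0
    apply hune
    rw [hueq, h0, zero_div]
  rw [Gf, hueq]
  have hR' : Rc x t * (Rc x t)⁻¹ = 1 := mul_inv_cancel₀ hRne
  have hD' : (1 + Rc x t - x * t) * (1 + Rc x t - x * t)⁻¹ = 1 := mul_inv_cancel₀ hune'
  simp only [div_eq_mul_inv, mul_inv, inv_inv]
  linear_combination ((1/2 - lam) * gf lam x t) * t * (t - x) * (1 + Rc x t - x * t)⁻¹ * hR'
    - ((1/2 - lam) * gf lam x t) * (1 + Rc x t - x * t)⁻¹ * hsq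
    + ((1/2 - lam) * gf lam x t) * (Rc x t - 1) * hD'
lemma geg_zero (l x : ℂ) : geg l 0 x = 1 := by
  simp [geg, poch_zero]

lemma geg_one (l x : ℂ) : geg l 1 x = l * (2 * x) := by
  simp [geg, poch_one]

lemma geg_rec (lam x : ℂ) (m : ℕ) :
    ((m : ℂ) + 2) * geg lam (m + 2) x
      = 2 * x * ((m : ℂ) + 1 + lam) * geg lam (m + 1) x
        - ((m : ℂ) + 2 * lam) * geg lam m x := by
  classical
  set N := m / 2 with hN
  -- the three summand functions
  set T2 : ℕ → ℂ := fun k => (-1 : ℂ) ^ k * poch lam (m + 2 - k) * (2 * x) ^ (m + 2 - 2 * k) /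
      ((Nat.factorial k : ℂ) * (Nat.factorial (m + 2 - 2 * k) : ℂ)) with hT2
  set T1 : ℕ → ℂ := fun k => (-1 : ℂ) ^ k * poch lam (m + 1 - k) * (2 * x) ^ (m + 1 - 2 * k) /
      ((Nat.factorial k : ℂ) * (Nat.factorial (m + 1 - 2 * k) : ℂ)) with hT1
  set T0 : ℕ → ℂ := fun k => (-1 : ℂ) ^ k * poch lam (m - k) * (2 * x) ^ (m - 2 * k) /
      ((Nat.factorial k : ℂ) * (Nat.factorial (m - 2 * k) : ℂ)) with hT0
  set V : ℕ → ℂ := fun k => ((m : ℂ) + 1 + lam) * (((m : ℂ) + 2) - 2 * (k : ℂ)) *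
      ((-1 : ℂ) ^ k * poch lam (m + 1 - k) * (2 * x) ^ (m + 2 - 2 * k) /
      ((Nat.factorial k : ℂ) * (Nat.factorial (m + 2 - 2 * k) : ℂ))) with hV
  set W : ℕ → ℂ := fun k => if k = 0 then 0 else ((m : ℂ) + 2 * lam) * T0 (k - 1) with hW
  have hr2 : (m + 2) / 2 + 1 = N + 2 := by omega
  have hr0 : m / 2 + 1 = N + 1 := by omega
  have hgeg2 : geg lam (m + 2) x = ∑ k ∈ Finset.range (N + 2), T2 k := by
    rw [geg, hr2]
  have hgeg1 : geg lam (m + 1) x = ∑ k ∈ Finset.range ((m + 1) / 2 + 1), T1 k := by rw [geg]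
  have hgeg0 : geg lam m x = ∑ k ∈ Finset.range (N + 1), T0 k := by rw [geg, hr0]
  -- middle sum transformation
  have hmid : 2 * x * ((m : ℂ) + 1 + lam) * geg lam (m + 1) x = ∑ k ∈ Finset.range (N + 2), V k := by
    rw [hgeg1, Finset.mul_sum]
    rw [show (∑ k ∈ Finset.range ((m+1)/2+1), 2 * x * ((m : ℂ) + 1 + lam) * T1 k)
        = ∑ k ∈ Finset.range ((m+1)/2+1), V k from ?_]
    · apply Finset.sum_subset
      · apply Finset.range_subset_range.2; omega
      · intro k hk hk'
        simp only [Finset.mem_range] at hk hk'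
        have h2k : 2 * k = m + 2 := by omega
        have hz : ((m : ℂ) + 2) - 2 * (k : ℂ) = 0 := by
          have h' : ((2 * k : ℕ) : ℂ) = ((m + 2 : ℕ) : ℂ) := by rw [h2k]
          push_cast at h'
          linear_combination -h'
        rw [hV]
        simp only
        rw [hz]
        ring
    · apply Finset.sum_congr rfl
      intro k hk
      simp only [Finset.mem_range] at hk
      have h2k : 2 * k ≤ m + 1 := by omega
      have e1 : m + 2 - 2 * k = (m + 1 - 2 * k) + 1 := by omega
      have e2 : ((m + 2 - 2 * k : ℕ) : ℂ) = ((m : ℂ) + 2) - 2 * (k : ℂ) := by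
        push_cast [Nat.cast_sub (by omega : 2 * k ≤ m + 2)]; ring
      rw [hV, hT1]
      simp only
      rw [e1, pow_succ, Nat.factorial_succ, Nat.cast_mul]
      have hfk : ((Nat.factorial k : ℂ)) ≠ 0 := Nat.cast_ne_zero.2 (Nat.factorial_ne_zero k)
      have hf1 : ((Nat.factorial (m + 1 - 2 * k) : ℂ)) ≠ 0 := Nat.cast_ne_zero.2 (Nat.factorial_ne_zero _)
      have e3 : ((m + 1 - 2 * k + 1 : ℕ) : ℂ) = ((m : ℂ) + 2) - 2 * (k : ℂ) := by
        push_cast [Nat.cast_sub (by omega : 2 * k ≤ m + 1)]; ring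
      rw [e3]
      have hnz : ((m : ℂ) + 2) - 2 * (k : ℂ) ≠ 0 := by
        rw [← e3]
        exact Nat.cast_ne_zero.2 (by omega)
      field_simp
  -- third sum transformation
  have hthird : ((m : ℂ) + 2 * lam) * geg lam m x = ∑ k ∈ Finset.range (N + 2), W k := by
    rw [hgeg0, Finset.mul_sum]
    rw [Finset.sum_range_succ' W (N + 1)]
    simp only [hW]
    simp
  rw [hgeg2, hmid, hthird, Finset.mul_sum, ← Finset.sum_sub_distrib]
  apply Finset.sum_congr rfl
  intro k hk
  simp only [Finset.mem_range] at hk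
  match k with
  | 0 =>
    simp only [hT2, hV, hW, if_pos rfl, Nat.sub_zero, Nat.mul_zero]
    rw [show m + 2 = m + 1 + 1 from rfl, poch_succ]
    have hf : ((Nat.factorial (m + 1 + 1) : ℂ)) ≠ 0 := Nat.cast_ne_zero.2 (Nat.factorial_ne_zero _)
    push_cast
    field_simp
    ring
  | (j+1) =>
    have hjN : j ≤ N := by omega
    have h2j : 2 * j ≤ m := by omega
    simp only [hT2, hV, hW, if_neg (Nat.succ_ne_zero j), Nat.add_sub_cancel]
    have e1 : m + 2 - (j + 1) = (m - j) + 1 := by omega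
    have e2 : m + 2 - 2 * (j + 1) = m - 2 * j := by omega
    have e3 : m + 1 - (j + 1) = m - j := by omega
    rw [e1, e2, e3, poch_succ, hT0]
    simp only
    have e4 : ((m - j : ℕ) : ℂ) = (m : ℂ) - (j : ℂ) := by
      push_cast [Nat.cast_sub (by omega : j ≤ m)]; ring
    rw [e4, Nat.factorial_succ, Nat.cast_mul]
    have hfj : ((Nat.factorial j : ℂ)) ≠ 0 := Nat.cast_ne_zero.2 (Nat.factorial_ne_zero j)
    have hfm : ((Nat.factorial (m - 2 * j) : ℂ)) ≠ 0 := Nat.cast_ne_zero.2 (Nat.factorial_ne_zero _)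
    have hj1 : ((j + 1 : ℕ) : ℂ) ≠ 0 := Nat.cast_ne_zero.2 (by omega)
    push_cast at hj1 ⊢
    field_simp
    ring




variable {lam x t : ℂ}

lemma Pf_zero (x : ℂ) : Pf x 0 = 1 := by simp [Pf]

lemma Rc_zero (x : ℂ) : Rc x 0 = 1 := by
  rw [Rc_eq, Pf_zero, one_cpow]

lemma uf_zero (x : ℂ) : uf x 0 = 1 := by
  rw [uf, Rc_zero]; ring

lemma gf_zero (lam x : ℂ) : gf lam x 0 = 1 := by
  have : gf lam x 0 = uf x 0 ^ (1/2 - lam) := rfl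
  rw [this, uf_zero, one_cpow]

lemma Gf_zero (lam x : ℂ) : Gf lam x 0 = -((1/2 - lam) * x) := by
  rw [Gf, gf_zero, uf_zero, Rc_zero]
  ring

lemma slit_Pf_zero (x : ℂ) : Pf x 0 ∈ slitPlane := by
  rw [Pf_zero]; exact one_mem_slitPlane

lemma slit_uf_zero (x : ℂ) : uf x 0 ∈ slitPlane := by
  rw [uf_zero]; exact one_mem_slitPlane

lemma continuousAt_Pf (x : ℂ) : ContinuousAt (Pf x) 0 := by
  have : Continuous (Pf x) := by unfold Pf; continuity
  exact this.continuousAt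

lemma continuousAt_uf (x : ℂ) : ContinuousAt (uf x) 0 := by
  have hR : ContinuousAt (Rc x) 0 := by
    have : ContinuousAt (fun y => Pf x y ^ ((1:ℂ)/2)) 0 :=
      (continuousAt_Pf x).cpow continuousAt_const (by rw [Pf_zero]; exact one_mem_slitPlane)
    exact this
  unfold uf
  exact ((continuousAt_const.add hR).sub (continuousAt_const.mul continuousAt_id)).div_const 2

lemma exists_ball (x : ℂ) : ∃ ε > 0, ∀ y : ℂ, ‖y‖ < ε →
    Pf x y ∈ slitPlane ∧ uf x y ∈ slitPlane := by
  have h1 : ∀ᶠ y in 𝓝 (0:ℂ), Pf x y ∈ slitPlane :=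
    (continuousAt_Pf x).eventually_mem (isOpen_slitPlane.mem_nhds (slit_Pf_zero x))
  have h2 : ∀ᶠ y in 𝓝 (0:ℂ), uf x y ∈ slitPlane :=
    (continuousAt_uf x).eventually_mem (isOpen_slitPlane.mem_nhds (slit_uf_zero x))
  obtain ⟨ε, hε, h⟩ := Metric.eventually_nhds_iff.mp (h1.and h2)
  exact ⟨ε, hε, fun y hy => h (by simpa [dist_zero_right] using hy)⟩

lemma diff_Gf (hP : Pf x t ∈ slitPlane) (hu : uf x t ∈ slitPlane) :
    DifferentiableAt ℂ (Gf lam x) t := by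
  have h1 : DifferentiableAt ℂ (gf lam x) t := (hasDerivAt_gf hP hu).differentiableAt
  have h2 : DifferentiableAt ℂ (uf x) t := (hasDerivAt_uf hP).differentiableAt
  have h3 : DifferentiableAt ℂ (Rc x) t := (hasDerivAt_Rc hP).differentiableAt
  have h4 : DifferentiableAt ℂ (fun s : ℂ => (s - x) / Rc x s) t :=
    (differentiableAt_id.sub (differentiableAt_const x)).div h3 (Rc_ne hP)
  exact ((differentiableAt_const _).mul (h1.div h2 (uf_ne hu))).mul
    ((h4.sub (differentiableAt_const x)).div_const 2)

lemma second_order (lam x : ℂ) {s : Set ℂ} (hs : IsOpen s)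
    (hall : ∀ y ∈ s, Pf x y ∈ slitPlane ∧ uf x y ∈ slitPlane) {t : ℂ} (ht : t ∈ s) :
    t * Pf x t * deriv (Gf lam x) t
      + (2*lam - (4*lam+1)*x*t + (2*lam+1)*t^2) * Gf lam x t
      + (-(2*x*lam*(lam - 1/2)) + (lam^2 - 1/4)*t) * gf lam x t = 0 := by
  obtain ⟨hP, hu⟩ := hall t ht
  have hGd : DifferentiableAt ℂ (Gf lam x) t := diff_Gf hP hu
  have hR := hasDerivAt_Rc (x := x) hP
  have hg := hasDerivAt_gf (lam := lam) hP hu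
  have hφ1 : HasDerivAt (fun y => y * Rc x y * Gf lam x y)
      ((1 * Rc x t + t * ((t - x) / Rc x t)) * Gf lam x t
        + t * Rc x t * deriv (Gf lam x) t) t :=
    ((hasDerivAt_id t).mul hR).mul hGd.hasDerivAt
  have hφ2 : HasDerivAt (fun y => (1/2 - lam) * (Rc x y - 1) * gf lam x y)
      ((0 * (Rc x t - 1) + (1/2 - lam) * ((t - x) / Rc x t)) * gf lam x t
        + (1/2 - lam) * (Rc x t - 1) * Gf lam x t) t :=
    ((hasDerivAt_const t (1/2 - lam)).mul (hR.sub_const 1)).mul hg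
  have hφ := hφ1.sub hφ2
  have hev : (fun y => y * Rc x y * Gf lam x y - (1/2 - lam) * (Rc x y - 1) * gf lam x y)
      =ᶠ[𝓝 t] (fun _ => (0:ℂ)) := by
    filter_upwards [hs.mem_nhds ht] with y hy
    have h := first_order (lam := lam) (hall y hy).1 (hall y hy).2
    linear_combination h
  have h0 : HasDerivAt (fun y => y * Rc x y * Gf lam x y
      - (1/2 - lam) * (Rc x y - 1) * gf lam x y) 0 t :=
    (hasDerivAt_const t (0:ℂ)).congr_of_eventuallyEq hev
  have heq := hφ.unique h0
  have h1 : t * Rc x t * Gf lam x t = (1/2 - lam) * (Rc x t - 1) * gf lam x t :=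
    first_order hP hu
  have h3 : Rc x t * Rc x t = 1 - 2*x*t + t^2 := Rc_sq hP
  have h4 : Rc x t * ((t - x) / Rc x t) = t - x := by
    field_simp [Rc_ne hP]
  have hPeq : Pf x t = 1 - 2*x*t + t^2 := rfl
  rw [hPeq]
  by_cases ht0 : t = 0
  · subst ht0
    rw [Gf_zero, gf_zero]
    ring
  · have key : t * (t * (1 - 2*x*t + t^2) * deriv (Gf lam x) t
      + (2*lam - (4*lam+1)*x*t + (2*lam+1)*t^2) * Gf lam x t
      + (-(2*x*lam*(lam - 1/2)) + (lam^2 - 1/4)*t) * gf lam x t) = 0 := by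
      linear_combination (t * Rc x t) * heq - ((1/2 - lam) * (1 + Rc x t)) * h1
        + (t * (2*(1/2 - lam) - 1) * Gf lam x t - t^2 * deriv (Gf lam x) t
            - (1/2 - lam)^2 * gf lam x t) * h3
        + ((1/2 - lam) * t * gf lam x t - t^2 * Gf lam x t) * h4
    rcases mul_eq_zero.mp key with h | h
    · exact absurd h ht0
    · exact h

lemma analyticAt_Pf (x : ℂ) : AnalyticAt ℂ (Pf x) 0 := by
  show AnalyticAt ℂ (fun y : ℂ => 1 - 2 * x * y + y ^ 2) 0
  exact (analyticAt_const.sub (analyticAt_const.mul analyticAt_id)).add (analyticAt_id.pow 2)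

lemma analyticAt_gf (lam x : ℂ) : AnalyticAt ℂ (gf lam x) 0 := by
  have hR : AnalyticAt ℂ (Rc x) 0 := by
    have : AnalyticAt ℂ (fun y => Pf x y ^ ((fun _ : ℂ => (1:ℂ)/2) y)) 0 :=
      (analyticAt_Pf x).cpow analyticAt_const (by rw [Pf_zero]; exact one_mem_slitPlane)
    exact this
  have hu : AnalyticAt ℂ (uf x) 0 := by
    show AnalyticAt ℂ (fun y : ℂ => (1 + Rc x y - x * y) / 2) 0
    exact ((analyticAt_const.add hR).sub (analyticAt_const.mul analyticAt_id)).div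
      analyticAt_const (by norm_num)
  have : AnalyticAt ℂ (fun y => uf x y ^ ((fun _ : ℂ => 1/2 - lam) y)) 0 :=
    hu.cpow analyticAt_const (by rw [uf_zero]; exact one_mem_slitPlane)
  exact this


end GegAux

open GegAux

set_option maxHeartbeats 2000000 in
/-- the companion alternative generating function (quasi-cyclic case, ν = 0). -/
theorem gegenbauer_alternative_gf' (lam : ℂ)
    (hlam : ∀ n : ℕ, lam ≠ -(n : ℂ) / 2) (x : ℂ) :
    ∃ ε > 0, ∀ t : ℂ, ‖t‖ < ε →
      (∑' n : ℕ, poch (lam - 1 / 2) n / poch (2 * lam) n * geg lam n x * t ^ n)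
        = ((1 + Rc x t - x * t) / 2) ^ (1 / 2 - lam) := by
  classical
  obtain ⟨ε, hε, hball⟩ := exists_ball x
  have hs_open : IsOpen (Metric.ball (0:ℂ) ε) := Metric.isOpen_ball
  have hmem : ∀ y : ℂ, y ∈ Metric.ball (0:ℂ) ε ↔ ‖y‖ < ε := by
    intro y; simp [Metric.mem_ball, dist_zero_right]
  have hall : ∀ y ∈ Metric.ball (0:ℂ) ε, Pf x y ∈ slitPlane ∧ uf x y ∈ slitPlane :=
    fun y hy => hball y ((hmem y).1 hy)
  have h0s : (0:ℂ) ∈ Metric.ball (0:ℂ) ε := (hmem 0).2 (by simpa using hε)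
  -- lam facts
  have h2lam_ne : ∀ n : ℕ, ((n:ℂ) + 2*lam) ≠ 0 := by
    intro n h
    exact hlam n (by linear_combination h/2)
  -- coefficients of g
  set b : ℕ → ℂ := fun n => iteratedDeriv n (gf lam x) 0 with hbdef
  -- derivative facts on the ball
  have hgd : ∀ y ∈ Metric.ball (0:ℂ) ε, HasDerivAt (gf lam x) (Gf lam x y) y :=
    fun y hy => hasDerivAt_gf (hall y hy).1 (hall y hy).2
  have hder1 : ∀ y ∈ Metric.ball (0:ℂ) ε, deriv (gf lam x) y = Gf lam x y :=
    fun y hy => (hgd y hy).deriv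
  have hder2 : ∀ y ∈ Metric.ball (0:ℂ) ε, deriv (deriv (gf lam x)) y = deriv (Gf lam x) y := by
    intro y hy
    apply Filter.EventuallyEq.deriv_eq
    filter_upwards [hs_open.mem_nhds hy] with z hz using hder1 z hz
  have hODE : ∀ y ∈ Metric.ball (0:ℂ) ε,
      y * (1 - 2*x*y + y^2) * deriv (deriv (gf lam x)) y
        + (2*lam - (4*lam+1)*x*y + (2*lam+1)*y^2) * deriv (gf lam x) y
        + (-(2*x*lam*(lam - 1/2)) + (lam^2 - 1/4)*y) * gf lam x y = 0 := by
    intro y hy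
    rw [hder1 y hy, hder2 y hy]
    have h := second_order lam x hs_open hall hy
    have hPeq : Pf x y = 1 - 2*x*y + y^2 := rfl
    rw [hPeq] at h
    exact h
  -- analyticity
  have hA0 : AnalyticAt ℂ (gf lam x) 0 := analyticAt_gf lam x
  have hA1 : AnalyticAt ℂ (deriv (gf lam x)) 0 := analyticAt_deriv hA0
  have hA2 : AnalyticAt ℂ (deriv (deriv (gf lam x))) 0 := analyticAt_deriv hA1
  -- index shifting
  have hb2 : ∀ n : ℕ, iteratedDeriv n (deriv (deriv (gf lam x))) 0 = b (n+2) := by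
    intro n
    show _ = iteratedDeriv (n+2) (gf lam x) 0
    rw [show n + 2 = n + 1 + 1 from rfl, iteratedDeriv_succ', iteratedDeriv_succ']
  have hb1 : ∀ n : ℕ, iteratedDeriv n (deriv (gf lam x)) 0 = b (n+1) := by
    intro n
    show _ = iteratedDeriv (n+1) (gf lam x) 0
    rw [iteratedDeriv_succ']
  have hb0' : ∀ n : ℕ, iteratedDeriv n (gf lam x) 0 = b n := fun _ => rfl
  -- the 8-term normal form of the ODE combination
  have hE : (fun y => (y * deriv (deriv (gf lam x)) y
        + ((-(2*x)) * (y^2 * deriv (deriv (gf lam x)) y) + y^3 * deriv (deriv (gf lam x)) y))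
      + (((2*lam) * deriv (gf lam x) y
          + ((-((4*lam+1)*x)) * (y * deriv (gf lam x) y)
            + (2*lam+1) * (y^2 * deriv (gf lam x) y)))
        + ((-(2*x*lam*(lam-1/2))) * gf lam x y + (lam^2 - 1/4) * (y * gf lam x y))))
      =ᶠ[𝓝 (0:ℂ)] (fun _ => (0:ℂ)) := by
    filter_upwards [hs_open.mem_nhds h0s] with y hy
    have h := hODE y hy
    linear_combination h
  have hitd : ∀ n : ℕ, iteratedDeriv n (fun y => (y * deriv (deriv (gf lam x)) y
        + ((-(2*x)) * (y^2 * deriv (deriv (gf lam x)) y) + y^3 * deriv (deriv (gf lam x)) y))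
      + (((2*lam) * deriv (gf lam x) y
          + ((-((4*lam+1)*x)) * (y * deriv (gf lam x) y)
            + (2*lam+1) * (y^2 * deriv (gf lam x) y)))
        + ((-(2*x*lam*(lam-1/2))) * gf lam x y + (lam^2 - 1/4) * (y * gf lam x y)))) 0 = 0 := by
    intro n
    rw [Filter.EventuallyEq.iteratedDeriv_eq n hE]
    exact itd_zero_fun n
  -- expansion of the iterated derivative
  have hAzg2 : AnalyticAt ℂ (fun y : ℂ => y * deriv (deriv (gf lam x)) y) 0 := analyticAt_id.mul hA2
  have hAz2g2 : AnalyticAt ℂ (fun y : ℂ => y^2 * deriv (deriv (gf lam x)) y) 0 :=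
    (analyticAt_id.pow 2).mul hA2
  have hAz3g2 : AnalyticAt ℂ (fun y : ℂ => y^3 * deriv (deriv (gf lam x)) y) 0 :=
    (analyticAt_id.pow 3).mul hA2
  have hAzg1 : AnalyticAt ℂ (fun y : ℂ => y * deriv (gf lam x) y) 0 := analyticAt_id.mul hA1
  have hAz2g1 : AnalyticAt ℂ (fun y : ℂ => y^2 * deriv (gf lam x) y) 0 :=
    (analyticAt_id.pow 2).mul hA1
  have hAzg0 : AnalyticAt ℂ (fun y : ℂ => y * gf lam x y) 0 := analyticAt_id.mul hA0
  have hA_c2 : AnalyticAt ℂ (fun y : ℂ => (-(2*x)) * (y^2 * deriv (deriv (gf lam x)) y)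
      + y^3 * deriv (deriv (gf lam x)) y) 0 :=
    (analyticAt_const.mul hAz2g2).add hAz3g2
  have hA_A : AnalyticAt ℂ (fun y : ℂ => y * deriv (deriv (gf lam x)) y
      + ((-(2*x)) * (y^2 * deriv (deriv (gf lam x)) y) + y^3 * deriv (deriv (gf lam x)) y)) 0 :=
    hAzg2.add hA_c2
  have hA_B2 : AnalyticAt ℂ (fun y : ℂ => (-((4*lam+1)*x)) * (y * deriv (gf lam x) y)
      + (2*lam+1) * (y^2 * deriv (gf lam x) y)) 0 :=
    (analyticAt_const.mul hAzg1).add (analyticAt_const.mul hAz2g1)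
  have hA_B : AnalyticAt ℂ (fun y : ℂ => (2*lam) * deriv (gf lam x) y
      + ((-((4*lam+1)*x)) * (y * deriv (gf lam x) y)
        + (2*lam+1) * (y^2 * deriv (gf lam x) y))) 0 :=
    (analyticAt_const.mul hA1).add hA_B2
  have hA_C : AnalyticAt ℂ (fun y : ℂ => (-(2*x*lam*(lam-1/2))) * gf lam x y
      + (lam^2 - 1/4) * (y * gf lam x y)) 0 :=
    (analyticAt_const.mul hA0).add (analyticAt_const.mul hAzg0)
  have hA_BC : AnalyticAt ℂ (fun y : ℂ => ((2*lam) * deriv (gf lam x) y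
      + ((-((4*lam+1)*x)) * (y * deriv (gf lam x) y)
        + (2*lam+1) * (y^2 * deriv (gf lam x) y)))
      + ((-(2*x*lam*(lam-1/2))) * gf lam x y + (lam^2 - 1/4) * (y * gf lam x y))) 0 :=
    hA_B.add hA_C
  have hexp : ∀ n : ℕ,
      ((n:ℂ) * iteratedDeriv (n-1) (deriv (deriv (gf lam x))) 0)
      + ((-(2*x)) * ((n:ℂ) * ((n:ℂ)-1) * iteratedDeriv (n-2) (deriv (deriv (gf lam x))) 0)
        + (n:ℂ) * ((n:ℂ)-1) * ((n:ℂ)-2) * iteratedDeriv (n-3) (deriv (deriv (gf lam x))) 0)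
      + (((2*lam) * iteratedDeriv n (deriv (gf lam x)) 0
          + ((-((4*lam+1)*x)) * ((n:ℂ) * iteratedDeriv (n-1) (deriv (gf lam x)) 0)
            + (2*lam+1) * ((n:ℂ) * ((n:ℂ)-1) * iteratedDeriv (n-2) (deriv (gf lam x)) 0)))
        + ((-(2*x*lam*(lam-1/2))) * iteratedDeriv n (gf lam x) 0
          + (lam^2 - 1/4) * ((n:ℂ) * iteratedDeriv (n-1) (gf lam x) 0))) = 0 := by
    intro n
    have h := hitd n
    rw [itd_add hA_A hA_BC n, itd_add hAzg2 hA_c2 n,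
      itd_add (show AnalyticAt ℂ (fun y : ℂ => (-(2*x)) * (y^2 * deriv (deriv (gf lam x)) y)) 0 from
        analyticAt_const.mul hAz2g2) hAz3g2 n,
      itd_add hA_B hA_C n,
      itd_cmul hAz2g2 (-(2*x)) n, itd_add (show AnalyticAt ℂ (fun y : ℂ => (2*lam) * deriv (gf lam x) y) 0 from
        analyticAt_const.mul hA1) hA_B2 n,
      itd_cmul hA1 (2*lam) n,
      itd_add (show AnalyticAt ℂ (fun y : ℂ => (-((4*lam+1)*x)) * (y * deriv (gf lam x) y)) 0 from
        analyticAt_const.mul hAzg1)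
        (show AnalyticAt ℂ (fun y : ℂ => (2*lam+1) * (y^2 * deriv (gf lam x) y)) 0 from
        analyticAt_const.mul hAz2g1) n,
      itd_cmul hAzg1 (-((4*lam+1)*x)) n, itd_cmul hAz2g1 (2*lam+1) n,
      itd_add (show AnalyticAt ℂ (fun y : ℂ => (-(2*x*lam*(lam-1/2))) * gf lam x y) 0 from
        analyticAt_const.mul hA0)
        (show AnalyticAt ℂ (fun y : ℂ => (lam^2 - 1/4) * (y * gf lam x y)) 0 from
        analyticAt_const.mul hAzg0) n,
      itd_cmul hA0 (-(2*x*lam*(lam-1/2))) n, itd_cmul hAzg0 (lam^2 - 1/4) n,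
      itd_zmul hA2 n, itd_z2mul hA2 n, itd_z3mul hA2 n,
      itd_zmul hA1 n, itd_z2mul hA1 n, itd_zmul hA0 n] at h
    exact h
  -- the recurrence for b
  have hrecb : ∀ n : ℕ, ((n:ℂ) + 2*lam) * b (n+1)
      = 2*x*((n:ℂ)+lam)*((n:ℂ)+lam-1/2) * b n
        - (n:ℂ)*((n:ℂ)+lam-1/2)*((n:ℂ)+lam-3/2) * b (n-1) := by
    intro n
    match n with
    | 0 =>
      have h := hexp 0
      simp only [show (0:ℕ) - 1 = 0 from rfl, hb1 0, hb0' 0] at h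
      norm_num at h ⊢
      linear_combination h
    | 1 =>
      have h := hexp 1
      simp only [show (1:ℕ) - 1 = 0 from rfl, show (1:ℕ) - 2 = 0 from rfl,
        show (1:ℕ) - 3 = 0 from rfl, hb2 0, hb1 0, hb1 1, hb0' 0, hb0' 1] at h
      norm_num at h ⊢
      linear_combination h
    | 2 =>
      have h := hexp 2
      simp only [show (2:ℕ) - 1 = 1 from rfl, show (2:ℕ) - 2 = 0 from rfl,
        show (2:ℕ) - 3 = 0 from rfl, hb2 1, hb2 0, hb1 0, hb1 1, hb1 2, hb0' 1, hb0' 2] at h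
      norm_num at h ⊢
      linear_combination h
    | (m+3) =>
      have h := hexp (m+3)
      simp only [show m + 3 - 1 = m + 2 from rfl, show m + 3 - 2 = m + 1 from rfl,
        show m + 3 - 3 = m from rfl, hb2 (m+2), hb2 (m+1), hb2 m,
        hb1 (m+2), hb1 (m+1), hb1 (m+3), hb0' (m+3), hb0' (m+2)] at h
      simp only [show m + 2 + 2 = m + 4 from rfl, show m + 1 + 2 = m + 3 from rfl,
        show m + 2 + 1 = m + 3 from rfl, show m + 1 + 1 = m + 2 from rfl,
        show m + 3 + 1 = m + 4 from rfl] at h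
      simp only [show m + 3 + 1 = m + 4 from rfl, show m + 3 - 1 = m + 2 from rfl]
      push_cast at h ⊢
      linear_combination h
  -- pochhammer nonvanishing
  have hpoch_ne : ∀ n : ℕ, poch (2*lam) n ≠ 0 := by
    intro n
    induction n with
    | zero => rw [poch_zero]; exact one_ne_zero
    | succ m ih =>
      rw [poch_succ]
      refine mul_ne_zero ih ?_
      intro hc
      exact h2lam_ne m (by linear_combination hc)
  -- recurrence for scaled coefficients
  have hreca : ∀ n : ℕ, ((n:ℂ) + 2*lam) * (((n+1).factorial : ℂ) *
        (poch (lam - 1/2) (n+1) / poch (2*lam) (n+1) * geg lam (n+1) x))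
      = 2*x*((n:ℂ)+lam)*((n:ℂ)+lam-1/2) * ((n.factorial : ℂ) *
        (poch (lam - 1/2) n / poch (2*lam) n * geg lam n x))
        - (n:ℂ)*((n:ℂ)+lam-1/2)*((n:ℂ)+lam-3/2) * (((n-1).factorial : ℂ) *
        (poch (lam - 1/2) (n-1) / poch (2*lam) (n-1) * geg lam (n-1) x)) := by
    intro n
    match n with
    | 0 =>
      rw [poch_succ, poch_succ, poch_zero, poch_zero, geg_zero, geg_one]
      norm_num
      have h2 : (2:ℂ)*lam ≠ 0 := by
        intro hc
        exact h2lam_ne 0 (by push_cast; linear_combination hc)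
      field_simp
    | (m+1) =>
      have e1 : poch (lam - 1/2) (m+2) = poch (lam - 1/2) m * ((lam - 1/2) + m) * ((lam - 1/2) + m + 1) := by
        rw [show m+2 = (m+1)+1 from rfl, poch_succ, poch_succ]
        push_cast; ring
      have e2 : poch (2*lam) (m+2) = poch (2*lam) m * ((2*lam) + m) * ((2*lam) + m + 1) := by
        rw [show m+2 = (m+1)+1 from rfl, poch_succ, poch_succ]
        push_cast; ring
      have e3 : poch (lam - 1/2) (m+1) = poch (lam - 1/2) m * ((lam - 1/2) + m) := poch_succ _ m
      have e4 : poch (2*lam) (m+1) = poch (2*lam) m * ((2*lam) + m) := poch_succ _ m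
      have f1 : (((m+2).factorial : ℕ) : ℂ) = ((m:ℂ)+2)*((m:ℂ)+1)*((m.factorial : ℕ) : ℂ) := by
        rw [show m+2 = (m+1)+1 from rfl, Nat.factorial_succ, Nat.factorial_succ]
        push_cast; ring
      have f2 : (((m+1).factorial : ℕ) : ℂ) = ((m:ℂ)+1)*((m.factorial : ℕ) : ℂ) := by
        rw [Nat.factorial_succ]; push_cast; ring
      have hq : poch (2*lam) m ≠ 0 := hpoch_ne m
      have hB : (2*lam) + (m:ℂ) ≠ 0 := by
        intro hc; exact h2lam_ne m (by linear_combination hc)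
      have hB1 : (2*lam) + (m:ℂ) + 1 ≠ 0 := by
        intro hc
        exact h2lam_ne (m+1) (by push_cast; linear_combination hc)
      rw [show m+1+1 = m+2 from rfl, show m+1-1 = m from rfl, e1, e2, e3, e4, f1, f2]
      have hrec := geg_rec lam x m
      push_cast at hrec ⊢
      set p := poch (lam - 1/2) m with hp
      set q := poch (2*lam) m with hqd
      set G2 := geg lam (m+2) x with hG2
      set G1 := geg lam (m+1) x with hG1
      set G0 := geg lam m x with hG0
      set F := ((m.factorial : ℕ) : ℂ) with hF
      set M := (m:ℂ) with hM
      clear_value p q G2 G1 G0 F M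
      simp only [div_eq_mul_inv, mul_inv]
      have r2 : (2*lam + M) * (2*lam + M)⁻¹ = 1 := mul_inv_cancel₀ hB
      have r3 : (2*lam + M + 1) * (2*lam + M + 1)⁻¹ = 1 := mul_inv_cancel₀ hB1
      linear_combination ((M+1) * F * p * (lam - 1/2 + M) * (lam - 1/2 + M + 1) * q⁻¹ * (2*lam+M)⁻¹) * hrec
        + ((M+1) * F * p * (lam - 1/2 + M) * (lam - 1/2 + M + 1) * q⁻¹ * (2*lam+M)⁻¹ * (M+2) * G2) * r3
        - ((M+1) * F * p * (lam - 1/2 + M) * (lam - 1/2 + M + 1) * q⁻¹ * G0) * r2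
  -- b equals scaled coefficients
  have habar0 : (((0:ℕ).factorial : ℂ) * (poch (lam - 1/2) 0 / poch (2*lam) 0 * geg lam 0 x)) = 1 := by
    rw [poch_zero, poch_zero, geg_zero]
    norm_num
  have hb0 : b 0 = 1 := by
    rw [hbdef]
    show iteratedDeriv 0 (gf lam x) 0 = 1
    rw [iteratedDeriv_zero]
    exact gf_zero lam x
  have hcoeff : ∀ n : ℕ, b n = ((n.factorial : ℂ) *
      (poch (lam - 1/2) n / poch (2*lam) n * geg lam n x)) := by
    intro n
    induction n using Nat.strong_induction_on with
    | _ n ih =>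
      match n with
      | 0 => rw [hb0, habar0]
      | (k+1) =>
        have h1 := hrecb k
        have h2 := hreca k
        rw [ih k (by omega), ih (k-1) (by omega)] at h1
        exact mul_left_cancel₀ (h2lam_ne k) (h1.trans h2.symm)
  -- conclusion
  refine ⟨ε, hε, fun t ht => ?_⟩
  have hdiff : DifferentiableOn ℂ (gf lam x) (Metric.ball 0 ε) :=
    fun y hy => ((hgd y hy).differentiableAt).differentiableWithinAt
  have hts : t ∈ Metric.ball (0:ℂ) ε := (hmem t).2 ht
  have hsum := Complex.hasSum_taylorSeries_on_ball hdiff hts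
  have hfun : (fun n : ℕ => ((n.factorial : ℕ) : ℂ)⁻¹ • (t - 0)^n • iteratedDeriv n (gf lam x) 0)
      = fun n : ℕ => poch (lam - 1/2) n / poch (2*lam) n * geg lam n x * t^n := by
    funext n
    have hbn : iteratedDeriv n (gf lam x) 0 = ((n.factorial : ℂ) *
        (poch (lam - 1/2) n / poch (2*lam) n * geg lam n x)) := hcoeff n
    rw [hbn]
    have hf : ((n.factorial : ℕ) : ℂ) ≠ 0 := Nat.cast_ne_zero.2 (Nat.factorial_ne_zero n)
    simp only [smul_eq_mul, sub_zero]
    rw [show ((n.factorial : ℕ) : ℂ)⁻¹ * (t^n * ((n.factorial : ℂ) *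
          (poch (lam - 1/2) n / poch (2*lam) n * geg lam n x)))
        = (((n.factorial : ℕ) : ℂ)⁻¹ * ((n.factorial : ℕ) : ℂ)) *
          (poch (lam - 1/2) n / poch (2*lam) n * geg lam n x * t^n) from by ring,
      inv_mul_cancel₀ hf, one_mul]
  rw [hfun] at hsum
  exact hsum.tsum_eq
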